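/- For every j ∈ ℤ, the sum of N(π) over all colored partitions π of length 3 with shape {j−1, j, j+1} (one part of each degree j−1, j, j+1, with arbitrary colors) equals 64. -/

import Mathlib

/-- A colored partition: a finitely supported multiplicity function on parts `X_s(j)`,
where `s` is the color and `j ∈ ℤ` the degree.  (Genuine colored partitions have
colors in `{1,…,8}`, expressed by `cpValid`.) -/
abbrev CPart := (ℕ × ℤ) →₀ ℕ

/-- The colored partition consisting of the single part `X_s(j)`. -/
noncomputable def Xp (s : ℕ) (j : ℤ) : CPart := Finsupp.single (s, j) 1

/-- The colors of all parts lie in `{1,…,8}`. -/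
def cpValid (π : CPart) : Prop := ∀ p ∈ π.support, 1 ≤ p.1 ∧ p.1 ≤ 8

/-- The length `ℓ(π)`: the total number of parts. -/
def cpLength (π : CPart) : ℕ := π.sum fun _ m => m

/-- The degree `|π|`: the sum of the degrees of the parts. -/
def cpDeg (π : CPart) : ℤ := π.sum fun p m => (m : ℤ) * p.2

/-- The shape `sh(π)`: the multiset of the degrees of the parts. -/
def cpShape (π : CPart) : Multiset ℤ := π.sum fun p m => Multiset.replicate m p.2

/-- `ρ ⊂ π` : `ρ` is a subpartition of `π`. -/
def cpSub (ρ π : CPart) : Prop := ∀ p, ρ p ≤ π p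

/-- The color pairs `(i₁,i₂)` for elements `X_{i₁}(j)X_{i₂}(j)` of `lt(R̄)`. -/
def eqPairs : List (ℕ × ℕ) :=
  [(1,1),(2,1),(2,2),(3,1),(3,2),(3,3),(4,2),(4,3),(4,4),(5,1),(5,2),(5,3),(5,4),(5,5),
   (6,2),(6,4),(6,5),(6,6),(7,3),(7,4),(7,5),(7,6),(7,7),(8,5),(8,6),(8,7),(8,8)]

/-- The color pairs `(i₁,i₂)` for elements `X_{i₁}(j−1)X_{i₂}(j)` of `lt(R̄)`. -/
def adjPairs : List (ℕ × ℕ) :=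
  [(1,1),(1,2),(1,3),(1,4),(1,5),(1,6),(1,7),(1,8),(2,2),(2,4),(2,6),(2,7),(2,8),
   (3,3),(3,5),(3,6),(3,7),(3,8),(4,7),(4,8),(5,6),(5,8),(6,6),(6,8),(7,7),(7,8),(8,8)]

/-- The set `lt(R̄)` of leading terms of the quadratic relations. -/
def ltR : Set CPart :=
  {ρ | ∃ j : ℤ, ∃ p ∈ eqPairs, ρ = Xp p.1 j + Xp p.2 j} ∪
  {ρ | ∃ j : ℤ, ∃ p ∈ adjPairs, ρ = Xp p.1 (j-1) + Xp p.2 j}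

/-- `E(π) = {ρ ∈ lt(R̄) : ρ ⊂ π}`. -/
def Eset (π : CPart) : Set CPart := {ρ | ρ ∈ ltR ∧ cpSub ρ π}

/-- `N(π) = max(#E(π) − 1, 0)`. -/
noncomputable def Npi (π : CPart) : ℕ := (Eset π).ncard - 1

/-- The set `R`: `lt(R̄)` together with the two families of cubic leading terms. -/
def Rset : Set CPart :=
  ltR ∪ {ρ | ∃ j : ℤ, ρ = Xp 3 (j-1) + Xp 4 j + Xp 1 j ∨
    ρ = Xp 8 (j-1) + Xp 4 (j-1) + Xp 6 j}

/-- The `𝔥`-weight of the color `s`, written in the basis `(α₁, α₂)`. -/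
def wcol : ℕ → ℤ × ℤ
  | 1 => (1, 1)
  | 2 => (1, 0)
  | 3 => (0, 1)
  | 4 => (0, 0)
  | 5 => (0, 0)
  | 6 => (0, -1)
  | 7 => (-1, 0)
  | 8 => (-1, -1)
  | _ => (0, 0)

/-- The weight `wt(π) ∈ ℤ²`. -/
def cpWt (π : CPart) : ℤ × ℤ := π.sum fun p m => m • wcol p.1

/-- The sum of `N(π)` over all colored partitions of length 3 and shape `{j−1,j,j+1}` is 64. -/
lemma Xp_apply (s : ℕ) (d : ℤ) (p : ℕ × ℤ) :
    Xp s d p = if p = (s, d) then 1 else 0 := by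
  simp [Xp, Finsupp.single_apply, eq_comm]

lemma cpLength_add (π σ : CPart) : cpLength (π + σ) = cpLength π + cpLength σ :=
  Finsupp.sum_add_index' (fun _ => rfl) (fun _ _ _ => rfl)

lemma cpLength_Xp (s : ℕ) (d : ℤ) : cpLength (Xp s d) = 1 := by
  simp [cpLength, Xp]

lemma cpShape_add (π σ : CPart) : cpShape (π + σ) = cpShape π + cpShape σ :=
  Finsupp.sum_add_index' (fun _ => rfl) (fun p a b => Multiset.replicate_add a b p.2)

lemma cpShape_Xp (s : ℕ) (d : ℤ) : cpShape (Xp s d) = {d} := by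
  unfold cpShape Xp
  rw [Finsupp.sum_single_index] <;> simp

lemma count_cpShape (π : CPart) (d : ℤ) :
    (cpShape π).count d = ∑ p ∈ π.support.filter (fun p => p.2 = d), π p := by
  unfold cpShape Finsupp.sum
  rw [Multiset.count_sum', Finset.sum_filter]
  refine Finset.sum_congr rfl fun p _ => ?_
  rw [Multiset.count_replicate]

lemma fiber_of_count_one (π : CPart) (d : ℤ) (h : (cpShape π).count d = 1) :
    ∃ s, π (s, d) = 1 ∧ ∀ p : ℕ × ℤ, p.2 = d → p.1 ≠ s → π p = 0 := by
  rw [count_cpShape] at h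
  set F := π.support.filter (fun p => p.2 = d) with hF
  have hone : ∀ p ∈ F, 1 ≤ π p := by
    intro p hp
    have := (Finset.mem_filter.mp hp).1
    rw [Finsupp.mem_support_iff] at this
    omega
  have hcard : F.card ≤ 1 := by
    calc F.card = ∑ _p ∈ F, 1 := by simp
    _ ≤ ∑ p ∈ F, π p := Finset.sum_le_sum hone
    _ = 1 := h
  have hne : F.Nonempty := by
    by_contra hc
    rw [Finset.not_nonempty_iff_eq_empty] at hc
    rw [hc] at h; simp at h
  have : F.card = 1 := le_antisymm hcard (Finset.Nonempty.card_pos hne)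
  obtain ⟨p0, hp0⟩ := Finset.card_eq_one.mp this
  have hp0d : p0.2 = d := by
    have : p0 ∈ F := by rw [hp0]; exact Finset.mem_singleton_self _
    exact (Finset.mem_filter.mp this).2
  have hval : π p0 = 1 := by rw [hp0] at h; simpa using h
  refine ⟨p0.1, ?_, ?_⟩
  · rwa [show ((p0.1, d) : ℕ × ℤ) = p0 by rw [← hp0d]]
  · intro p hpd hps
    by_contra hc
    have : p ∈ F := Finset.mem_filter.mpr ⟨Finsupp.mem_support_iff.mpr hc, hpd⟩
    rw [hp0, Finset.mem_singleton] at this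
    exact hps (by rw [this])

lemma fiber_of_count_zero (π : CPart) (d : ℤ) (h : (cpShape π).count d = 0) :
    ∀ s, π (s, d) = 0 := by
  rw [count_cpShape] at h
  intro s
  by_contra hc
  have hm : (s, d) ∈ π.support.filter (fun p => p.2 = d) :=
    Finset.mem_filter.mpr ⟨Finsupp.mem_support_iff.mpr hc, rfl⟩
  have := Finset.sum_eq_zero_iff.mp h _ hm
  exact hc this

lemma f_apply (a b c : ℕ) (j : ℤ) (p : ℕ × ℤ) :
    (Xp a (j-1) + Xp b j + Xp c (j+1)) p =
      (if p = (a, j-1) then 1 else 0) + (if p = (b, j) then 1 else 0)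
        + (if p = (c, j+1) then 1 else 0) := by
  simp [Finsupp.add_apply, Xp_apply]

lemma pair_ne (s a : ℕ) (d e : ℤ) (h : d ≠ e) : ((s, d) : ℕ × ℤ) ≠ (a, e) := by
  intro hc
  exact h (congrArg Prod.snd hc)

lemma mem_iff (j : ℤ) (π : CPart) :
    (cpValid π ∧ cpLength π = 3 ∧ cpShape π = {j-1, j, j+1}) ↔
    ∃ a b c : ℕ, (1 ≤ a ∧ a ≤ 8) ∧ (1 ≤ b ∧ b ≤ 8) ∧ (1 ≤ c ∧ c ≤ 8) ∧
      π = Xp a (j-1) + Xp b j + Xp c (j+1) := by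
  have d12 : (j:ℤ) - 1 ≠ j := by omega
  have d13 : (j:ℤ) - 1 ≠ j + 1 := by omega
  have d21 : (j:ℤ) ≠ j - 1 := by omega
  have d23 : (j:ℤ) ≠ j + 1 := by omega
  have d31 : (j:ℤ) + 1 ≠ j - 1 := by omega
  have d32 : (j:ℤ) + 1 ≠ j := by omega
  constructor
  · rintro ⟨hv, -, hsh⟩
    have h1 : (cpShape π).count (j-1) = 1 := by
      rw [hsh]
      simp [Multiset.insert_eq_cons, Multiset.count_cons, Multiset.count_singleton, d12, d13]
    have h2 : (cpShape π).count j = 1 := by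
      rw [hsh]
      simp [Multiset.insert_eq_cons, Multiset.count_cons, Multiset.count_singleton, d21, d23]
    have h3 : (cpShape π).count (j+1) = 1 := by
      rw [hsh]
      simp [Multiset.insert_eq_cons, Multiset.count_cons, Multiset.count_singleton, d31, d32]
    obtain ⟨a, ha1, ha2⟩ := fiber_of_count_one π (j-1) h1
    obtain ⟨b, hb1, hb2⟩ := fiber_of_count_one π j h2
    obtain ⟨c, hc1, hc2⟩ := fiber_of_count_one π (j+1) h3
    have hmem : ∀ s d, π (s, d) = 1 → (1 ≤ s ∧ s ≤ 8) := by
      intro s d hs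
      exact hv (s, d) (Finsupp.mem_support_iff.mpr (by rw [hs]; exact one_ne_zero))
    refine ⟨a, b, c, hmem a _ ha1, hmem b _ hb1, hmem c _ hc1, ?_⟩
    ext p
    obtain ⟨s, e⟩ := p
    rw [f_apply]
    by_cases he1 : e = j - 1
    · rw [he1]
      rw [if_neg (pair_ne s b (j-1) j d12), if_neg (pair_ne s c (j-1) (j+1) d13)]
      by_cases hsa : s = a
      · rw [hsa, ha1, if_pos rfl]
      · rw [ha2 (s, j-1) rfl hsa, if_neg (by simp [hsa])]
    · by_cases he2 : e = j
      · rw [he2]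
        rw [if_neg (pair_ne s a j (j-1) d21), if_neg (pair_ne s c j (j+1) d23)]
        by_cases hsb : s = b
        · rw [hsb, hb1, if_pos rfl]
        · rw [hb2 (s, j) rfl hsb, if_neg (by simp [hsb])]
      · by_cases he3 : e = j + 1
        · rw [he3]
          rw [if_neg (pair_ne s a (j+1) (j-1) d31), if_neg (pair_ne s b (j+1) j d32)]
          by_cases hsc : s = c
          · rw [hsc, hc1, if_pos rfl]
          · rw [hc2 (s, j+1) rfl hsc, if_neg (by simp [hsc])]
        · have h0 : (cpShape π).count e = 0 := by
            rw [hsh]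
            simp [Multiset.insert_eq_cons, Multiset.count_cons, Multiset.count_singleton,
              he1, he2, he3]
          rw [fiber_of_count_zero π e h0 s]
          rw [if_neg (pair_ne s a e (j-1) he1), if_neg (pair_ne s b e j he2),
            if_neg (pair_ne s c e (j+1) he3)]
  · rintro ⟨a, b, c, ha, hb, hc, rfl⟩
    refine ⟨?_, ?_, ?_⟩
    · intro p hp
      rw [Finsupp.mem_support_iff, f_apply] at hp
      by_cases h1 : p = (a, j-1)
      · subst h1; exact ha
      · by_cases h2 : p = (b, j)
        · subst h2; exact hb
        · by_cases h3 : p = (c, j+1)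
          · subst h3; exact hc
          · simp [h1, h2, h3] at hp
    · rw [cpLength_add, cpLength_add, cpLength_Xp, cpLength_Xp, cpLength_Xp]
    · rw [cpShape_add, cpShape_add, cpShape_Xp, cpShape_Xp, cpShape_Xp]
      rfl

lemma pos_of (a b c : ℕ) (j : ℤ) (p : ℕ × ℤ)
    (h : 1 ≤ (Xp a (j-1) + Xp b j + Xp c (j+1)) p) :
    p = (a, j-1) ∨ p = (b, j) ∨ p = (c, j+1) := by
  rw [f_apply] at h
  split_ifs at h with h1 h2 h3 <;> tauto

lemma le_one_of (a b c : ℕ) (j : ℤ) (p : ℕ × ℤ) :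
    (Xp a (j-1) + Xp b j + Xp c (j+1)) p ≤ 1 := by
  rw [f_apply]
  obtain ⟨s, e⟩ := p
  have d12 : (j:ℤ) - 1 ≠ j := by omega
  have d13 : (j:ℤ) - 1 ≠ j + 1 := by omega
  have d23 : (j:ℤ) ≠ j + 1 := by omega
  by_cases h1 : ((s, e) : ℕ × ℤ) = (a, j-1)
  · have he : e = j - 1 := congrArg Prod.snd h1
    rw [if_pos h1, if_neg (by rw [he]; exact pair_ne s b _ _ d12),
      if_neg (by rw [he]; exact pair_ne s c _ _ d13)]
  · by_cases h2 : ((s, e) : ℕ × ℤ) = (b, j)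
    · have he : e = j := congrArg Prod.snd h2
      rw [if_neg h1, if_pos h2, if_neg (by rw [he]; exact pair_ne s c _ _ d23)]
    · rw [if_neg h1, if_neg h2]
      split_ifs <;> omega

lemma two_apply (i1 i2 : ℕ) (d1 d2 : ℤ) (p : ℕ × ℤ) :
    (Xp i1 d1 + Xp i2 d2) p =
      (if p = (i1, d1) then 1 else 0) + (if p = (i2, d2) then 1 else 0) := by
  simp [Finsupp.add_apply, Xp_apply]

lemma Eset_eq (a b c : ℕ) (j : ℤ) :
    Eset (Xp a (j-1) + Xp b j + Xp c (j+1)) =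
      (if (a,b) ∈ adjPairs then {Xp a (j-1) + Xp b j} else (∅ : Set CPart)) ∪
      (if (b,c) ∈ adjPairs then {Xp b j + Xp c (j+1)} else ∅) := by
  ext ρ
  constructor
  · rintro ⟨hlt, hsub⟩
    rcases hlt with ⟨k, q, hq, rfl⟩ | ⟨k, q, hq, rfl⟩
    · -- equal-degree relation: impossible
      exfalso
      have hs1 : (1 : ℕ) ≤ (Xp a (j-1) + Xp b j + Xp c (j+1)) (q.1, k) := by
        refine le_trans ?_ (hsub (q.1, k))
        rw [two_apply, if_pos rfl]
        omega
      have hs2 : (1 : ℕ) ≤ (Xp a (j-1) + Xp b j + Xp c (j+1)) (q.2, k) := by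
        refine le_trans ?_ (hsub (q.2, k))
        rw [two_apply, if_pos rfl]
        omega
      have hm1 := pos_of a b c j _ hs1
      have hm2 := pos_of a b c j _ hs2
      have heq : q.1 = q.2 := by
        rcases hm1 with h | h | h <;> rcases hm2 with h' | h' | h' <;>
          first
          | (exact (congrArg Prod.fst h).trans (congrArg Prod.fst h').symm)
          | (exfalso;
             have e1 := congrArg Prod.snd h; have e2 := congrArg Prod.snd h';
             simp only at e1 e2; omega)
      have h2 : (Xp q.1 k + Xp q.2 k) (q.1, k) = 2 := by
        rw [two_apply, if_pos rfl, if_pos (by rw [heq])]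
      have := hsub (q.1, k)
      rw [h2] at this
      have := le_one_of a b c j (q.1, k)
      omega
    · -- adjacent-degree relation
      have hs1 : (1 : ℕ) ≤ (Xp a (j-1) + Xp b j + Xp c (j+1)) (q.1, k-1) := by
        refine le_trans ?_ (hsub (q.1, k-1))
        rw [two_apply, if_pos rfl]
        omega
      have hs2 : (1 : ℕ) ≤ (Xp a (j-1) + Xp b j + Xp c (j+1)) (q.2, k) := by
        refine le_trans ?_ (hsub (q.2, k))
        rw [two_apply, if_pos rfl]
        omega
      have hm1 := pos_of a b c j _ hs1
      have hm2 := pos_of a b c j _ hs2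
      simp only [Prod.mk.injEq] at hm1 hm2
      rcases hm1 with ⟨hA, hK⟩ | ⟨hA, hK⟩ | ⟨hA, hK⟩ <;>
        rcases hm2 with ⟨hB, hL⟩ | ⟨hB, hL⟩ | ⟨hB, hL⟩ <;>
        try (exfalso; omega)
      · -- q.1 = a at j-1, q.2 = b at j
        left
        have hqab : q = (a, b) := by rw [← hA, ← hB]
        rw [hqab] at hq
        rw [if_pos hq, Set.mem_singleton_iff, hA, hB, hK, hL]
      · -- q.1 = b at j, q.2 = c at j+1
        right
        have hqbc : q = (b, c) := by rw [← hA, ← hB]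
        rw [hqbc] at hq
        rw [if_pos hq, Set.mem_singleton_iff, hA, hB, hK, hL]
  · intro hρ
    rcases hρ with hρ | hρ
    · by_cases hab : (a, b) ∈ adjPairs
      · rw [if_pos hab] at hρ
        rw [Set.mem_singleton_iff] at hρ
        subst hρ
        refine ⟨Or.inr ⟨j, (a, b), hab, rfl⟩, ?_⟩
        intro p
        rw [two_apply, f_apply]
        split_ifs <;> omega
      · rw [if_neg hab] at hρ
        exact absurd hρ (Set.notMem_empty ρ)
    · by_cases hbc : (b, c) ∈ adjPairs
      · rw [if_pos hbc] at hρ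
        rw [Set.mem_singleton_iff] at hρ
        subst hρ
        refine ⟨Or.inr ⟨j + 1, (b, c), hbc, by rw [add_sub_cancel_right]⟩, ?_⟩
        intro p
        rw [two_apply, f_apply]
        split_ifs <;> omega
      · rw [if_neg hbc] at hρ
        exact absurd hρ (Set.notMem_empty ρ)

lemma Npi_eq (a b c : ℕ) (j : ℤ) :
    Npi (Xp a (j-1) + Xp b j + Xp c (j+1)) =
      if (a,b) ∈ adjPairs ∧ (b,c) ∈ adjPairs then 1 else 0 := by
  have hne : (Xp a (j-1) + Xp b j) ≠ (Xp b j + Xp c (j+1)) := by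
    intro h
    have h' := DFunLike.congr_fun h (a, j-1)
    rw [two_apply, two_apply, if_pos rfl, if_neg (pair_ne a b (j-1) j (by omega)),
      if_neg (pair_ne a c (j-1) (j+1) (by omega))] at h'
    omega
  simp only [Npi, Eset_eq]
  by_cases hab : (a,b) ∈ adjPairs
  · by_cases hbc : (b,c) ∈ adjPairs
    · rw [if_pos hab, if_pos hbc, if_pos ⟨hab, hbc⟩, Set.singleton_union, Set.ncard_pair hne]
    · rw [if_pos hab, if_neg hbc, if_neg (by tauto), Set.union_empty, Set.ncard_singleton]
  · by_cases hbc : (b,c) ∈ adjPairs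
    · rw [if_neg hab, if_pos hbc, if_neg (by tauto), Set.empty_union, Set.ncard_singleton]
    · rw [if_neg hab, if_neg hbc, if_neg (by tauto), Set.empty_union, Set.ncard_empty]

lemma f_inj (j : ℤ) (a b c a' b' c' : ℕ)
    (h : Xp a (j-1) + Xp b j + Xp c (j+1) = Xp a' (j-1) + Xp b' j + Xp c' (j+1)) :
    a = a' ∧ b = b' ∧ c = c' := by
  refine ⟨?_, ?_, ?_⟩
  · have h' := DFunLike.congr_fun h (a, j-1)
    rw [f_apply, f_apply, if_pos rfl,
      if_neg (pair_ne a b (j-1) j (by omega)), if_neg (pair_ne a c (j-1) (j+1) (by omega)),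
      if_neg (pair_ne a b' (j-1) j (by omega)),
      if_neg (pair_ne a c' (j-1) (j+1) (by omega))] at h'
    by_contra hc
    rw [if_neg (by simp [hc])] at h'
    omega
  · have h' := DFunLike.congr_fun h (b, j)
    rw [f_apply, f_apply, if_pos rfl,
      if_neg (pair_ne b a j (j-1) (by omega)), if_neg (pair_ne b c j (j+1) (by omega)),
      if_neg (pair_ne b a' j (j-1) (by omega)),
      if_neg (pair_ne b c' j (j+1) (by omega))] at h'
    by_contra hc
    rw [if_neg (by simp [hc])] at h'
    omega
  · have h' := DFunLike.congr_fun h (c, j+1)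
    rw [f_apply, f_apply, if_pos rfl,
      if_neg (pair_ne c a (j+1) (j-1) (by omega)), if_neg (pair_ne c b (j+1) j (by omega)),
      if_neg (pair_ne c a' (j+1) (j-1) (by omega)),
      if_neg (pair_ne c b' (j+1) j (by omega))] at h'
    by_contra hc
    rw [if_neg (by simp [hc])] at h'
    omega


theorem sum_N_shape_jm1_j_jp1 (j : ℤ) :
    (∑ᶠ π ∈ {π : CPart | cpValid π ∧ cpLength π = 3 ∧ cpShape π = {j - 1, j, j + 1}},
      Npi π) = 64 := by
  classical
  have hset : {π : CPart | cpValid π ∧ cpLength π = 3 ∧ cpShape π = {j - 1, j, j + 1}} =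
      ↑(((Finset.Icc 1 8 ×ˢ Finset.Icc 1 8 ×ˢ Finset.Icc 1 8) : Finset (ℕ × ℕ × ℕ)).image
        (fun t => Xp t.1 (j-1) + Xp t.2.1 j + Xp t.2.2 (j+1))) := by
    ext π
    rw [Set.mem_setOf_eq, mem_iff, Finset.coe_image, Set.mem_image]
    constructor
    · rintro ⟨a, b, c, ha, hb, hc, rfl⟩
      refine ⟨(a, b, c), ?_, rfl⟩
      rw [Finset.mem_coe, Finset.mem_product, Finset.mem_product]
      exact ⟨Finset.mem_Icc.mpr ha, Finset.mem_Icc.mpr hb, Finset.mem_Icc.mpr hc⟩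
    · rintro ⟨⟨a, b, c⟩, ht, rfl⟩
      rw [Finset.mem_coe, Finset.mem_product, Finset.mem_product, Finset.mem_Icc,
        Finset.mem_Icc, Finset.mem_Icc] at ht
      exact ⟨a, b, c, ⟨ht.1.1, ht.1.2⟩, ⟨ht.2.1.1, ht.2.1.2⟩, ⟨ht.2.2.1, ht.2.2.2⟩, rfl⟩
  rw [hset, finsum_mem_coe_finset,
    Finset.sum_image (fun x _ y _ hxy => by
      obtain ⟨h1, h2, h3⟩ := f_inj j x.1 x.2.1 x.2.2 y.1 y.2.1 y.2.2 hxy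
      exact Prod.ext h1 (Prod.ext h2 h3))]
  simp only [Npi_eq]
  set_option maxRecDepth 40000 in decide
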